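/- In the divisible-load switch model, the optimal value T_0 of the linear program 'minimize T subject to |δ_i| ≤ T·b_i for all i, δ_i ≥ α_i − T·s_i for all i, and Σ_i δ_i = 0' is a lower bound on the makespan of every valid redistribution-and-computation schedule: for any valid schedule of makespan T, the amounts sent and received in that schedule yield values δ_i satisfying all constraints of the linear program with that T, hence T_0 ≤ T. -/
import Mathlib


/-- **The linear program is a lower bound on the makespan.**
In the divisible-load switch model (`m` workers, bandwidths `b i`, speeds `s i`,
initial loads `a i`), consider any valid schedule of makespan `T`: each worker
sends `send i ≥ 0` and receives `recv i ≥ 0` (not both), within the bandwidth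
bounds `send i ≤ T * b i` and `recv i ≤ T * b i`; a sender must send at least its
unprocessable excess (`a i - T * s i ≤ send i`), a receiver must be able to
process everything it holds (`a i + recv i ≤ T * s i`), a worker doing neither
must process its own load (`a i ≤ T * s i`), and the total sent equals the total
received.  Then the imbalances `δ i = send i - recv i` satisfy all the
constraints of the linear program `minimize T'` subject to `|δ i| ≤ T' * b i`,
`a i - T' * s i ≤ δ i` and `∑ δ i = 0`; consequently the optimal value `T₀` of
the linear program is at most `T`. -/
theorem lp_lower_bound_on_makespan
    (m : ℕ) (hm : 0 < m) (b s a : Fin m → ℝ)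
    (hb : ∀ i, 0 < b i) (hs : ∀ i, 0 < s i) (ha : ∀ i, 0 ≤ a i)
    (T : ℝ) (send recv : Fin m → ℝ)
    (hsend0 : ∀ i, 0 ≤ send i) (hrecv0 : ∀ i, 0 ≤ recv i)
    (hexcl : ∀ i, send i = 0 ∨ recv i = 0)
    (hsendB : ∀ i, send i ≤ T * b i)
    (hrecvB : ∀ i, recv i ≤ T * b i)
    (hsendLB : ∀ i, 0 < send i → a i - T * s i ≤ send i)
    (hrecvUB : ∀ i, 0 < recv i → a i + recv i ≤ T * s i)
    (hneither : ∀ i, send i = 0 → recv i = 0 → a i ≤ T * s i)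
    (hconserv : ∑ i, send i = ∑ i, recv i) :
    (∀ i, |send i - recv i| ≤ T * b i) ∧
    (∀ i, a i - T * s i ≤ send i - recv i) ∧
    (∑ i, (send i - recv i)) = 0 ∧
    sInf {T' : ℝ | ∃ d : Fin m → ℝ, (∀ i, |d i| ≤ T' * b i) ∧
      (∀ i, a i - T' * s i ≤ d i) ∧ ∑ i, d i = 0} ≤ T := by
  have h1 : ∀ i, |send i - recv i| ≤ T * b i := by
    intro i
    rcases hexcl i with h | h <;> rw [h] <;> simp [abs_le]
    · exact ⟨by linarith [hrecv0 i, hrecvB i], hrecvB i⟩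
    · exact ⟨by linarith [hsend0 i, hsendB i], hsendB i⟩
  have h2 : ∀ i, a i - T * s i ≤ send i - recv i := by
    intro i
    rcases lt_or_eq_of_le (hrecv0 i) with h | h
    · have := hrecvUB i h
      have hse : send i = 0 ∨ recv i = 0 := hexcl i
      rcases hse with hs0 | hr0
      · rw [hs0]; linarith
      · linarith
    · rcases lt_or_eq_of_le (hsend0 i) with h' | h'
      · have := hsendLB i h'; linarith
      · have := hneither i h'.symm h.symm; linarith
  have h3 : (∑ i, (send i - recv i)) = 0 := by
    rw [Finset.sum_sub_distrib, hconserv]; ring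
  refine ⟨h1, h2, h3, ?_⟩
  apply csInf_le
  · refine ⟨0, fun T' hT' => ?_⟩
    obtain ⟨d, hd1, _, _⟩ := hT'
    have i0 : Fin m := ⟨0, hm⟩
    have := (abs_nonneg (d i0)).trans (hd1 i0)
    nlinarith [hb i0]
  · exact ⟨fun i => send i - recv i, h1, h2, h3⟩
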